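/- Spectral bounds for the MMOO MGF: Let S(0,t) = P Σ_{k=0}^{t-1} X_k for a stationary two-state Markov chain with transition matrix Π = [[p_{00}, p_{01}],[p_{10}, p_{11}]], p_{01}+p_{10} < 1, and let L(θ) = Π · diag(1, e^{θP}). Let m_+(θ) ≥ m_−(θ) be the eigenvalues of L(θ), and M_c(θ) = (1−p) + p e^{θP} with p = p_{01}/(p_{01}+p_{10}). Then M_S(θ,0,t) := E[e^{θ S(0,t)}] satisfies M_S(θ,0,t) = K(θ) m_+(θ)^t + (1−K(θ)) m_−(θ)^t with K(θ) = (M_c(θ) − m_−(θ))/(m_+(θ) − m_−(θ)) ∈ (0,1), and hence M_c(θ)^t ≤ M_S(θ,0,t) ≤ m_+(θ)^t and M_S(θ,0,t) ≥ K(θ) m_+(θ)^t for all t ≥ 0. -/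

import Mathlib

/-- spectral bounds for the MMOO MGF: with L(θ) = Π·diag(1, e^{θP}),
eigenvalues m_− ≤ m_+ satisfying m_+ > M_c(θ) > m_−, and
M_S(θ,0,t) = (1−p, p)·L(θ)^t·(1,1)^T, one has
M_S = K m_+^t + (1−K) m_−^t with K = (M_c − m_−)/(m_+ − m_−) ∈ (0,1),
hence M_c^t ≤ M_S ≤ m_+^t and M_S ≥ K m_+^t. -/
theorem mmoo_mgf_spectral_bounds (p01 p10 : ℝ) (h01 : 0 < p01) (h10 : 0 < p10)
    (hsum : p01 + p10 < 1) (P θ : ℝ) (hP : 0 < P)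
    (p : ℝ) (hp : p = p01 / (p01 + p10))
    (L : Matrix (Fin 2) (Fin 2) ℝ)
    (hL : L = Matrix.of ![![(1 - p01) * 1, p01 * Real.exp (θ * P)],
                          ![p10 * 1, (1 - p10) * Real.exp (θ * P)]])
    (Mc : ℝ) (hMc : Mc = (1 - p) + p * Real.exp (θ * P))
    (mp mm : ℝ) (hmm : mm ≤ mp)
    (htrace : mp + mm = Matrix.trace L) (hdet : mp * mm = Matrix.det L)
    (hgap : mm < Mc ∧ Mc < mp)
    (K : ℝ) (hK : K = (Mc - mm) / (mp - mm))
    (MS : ℕ → ℝ)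
    (hMS : ∀ t : ℕ, MS t = dotProduct ![1 - p, p] ((L ^ t).mulVec ![1, 1])) :
    ∀ t : ℕ,
      MS t = K * mp ^ t + (1 - K) * mm ^ t ∧
      (0 < K ∧ K < 1) ∧
      Mc ^ t ≤ MS t ∧ MS t ≤ mp ^ t ∧ K * mp ^ t ≤ MS t := by
  obtain ⟨hgap1, hgap2⟩ := hgap
  have hs : 0 < p01 + p10 := by linarith
  have hp0 : 0 < p := by rw [hp]; positivity
  have hp1 : p < 1 := by rw [hp, div_lt_one hs]; linarith
  have he : 0 < Real.exp (θ * P) := Real.exp_pos _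
  have hMc0 : 0 < Mc := by rw [hMc]; nlinarith
  have hmp0 : 0 < mp := lt_trans hMc0 hgap2
  have hdetpos : 0 < Matrix.det L := by
    rw [hL]
    simp [Matrix.det_fin_two]
    nlinarith
  have hmm0 : 0 < mm := by
    rcases lt_or_ge 0 mm with h | h
    · exact h
    · exfalso; nlinarith
  have hgap' : mm < mp := lt_trans hgap1 hgap2
  have hK0 : 0 < K := by rw [hK]; apply div_pos <;> linarith
  have hK1 : K < 1 := by rw [hK, div_lt_one (by linarith)]; linarith
  have hKid : K * (mp - mm) = Mc - mm := by
    rw [hK, div_mul_cancel₀]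
    linarith
  have hMS0 : MS 0 = 1 := by
    rw [hMS]
    simp [dotProduct, Fin.sum_univ_two, Matrix.mulVec, Matrix.one_apply]
  have hMS1 : MS 1 = Mc := by
    rw [hMS, pow_one, hL, hMc, hp]
    simp [dotProduct, Fin.sum_univ_two, Matrix.mulVec]
    field_simp
    ring
  have hCH : L * L = (mp + mm) • L - (mp * mm) • 1 := by
    rw [htrace, hdet, hL]
    ext i j
    fin_cases i <;> fin_cases j <;>
      simp [Matrix.mul_apply, Fin.sum_univ_two, Matrix.trace_fin_two,
        Matrix.det_fin_two, Matrix.one_apply] <;> ring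
  have hrec : ∀ t, MS (t + 2) = (mp + mm) * MS (t + 1) - (mp * mm) * MS t := by
    intro t
    have hpow : L ^ (t + 2) = (mp + mm) • L ^ (t + 1) - (mp * mm) • L ^ t := by
      have : L ^ (t + 2) = L ^ t * (L * L) := by
        rw [pow_add, pow_two]
      rw [this, hCH, Matrix.mul_sub, Matrix.mul_smul, Matrix.mul_smul,
        Matrix.mul_one, ← pow_succ]
    rw [hMS, hMS, hMS, hpow]
    simp [Matrix.sub_mulVec, Matrix.smul_mulVec, dotProduct_sub,
      dotProduct_smul, smul_eq_mul]
    ring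
  have hf : ∀ t, MS t = K * mp ^ t + (1 - K) * mm ^ t := by
    have key : ∀ t, MS t = K * mp ^ t + (1 - K) * mm ^ t ∧
        MS (t + 1) = K * mp ^ (t + 1) + (1 - K) * mm ^ (t + 1) := by
      intro t
      induction t with
      | zero =>
        refine ⟨by rw [hMS0]; ring, ?_⟩
        rw [hMS1, pow_one, pow_one]
        nlinarith [hKid]
      | succ n ih =>
        refine ⟨ih.2, ?_⟩
        rw [hrec n, ih.1, ih.2]
        ring
    exact fun t => (key t).1
  intro t
  have hft := hf t
  have hMceq : Mc = K * mp + (1 - K) * mm := by nlinarith [hKid]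
  have hjensen : Mc ^ t ≤ K * mp ^ t + (1 - K) * mm ^ t := by
    have h := (convexOn_pow t).2 (Set.mem_Ici.2 hmp0.le) (Set.mem_Ici.2 hmm0.le)
      hK0.le (by linarith : (0:ℝ) ≤ 1 - K) (by ring)
    simp only [smul_eq_mul] at h
    rw [hMceq]
    exact h
  refine ⟨hft, ⟨hK0, hK1⟩, ?_, ?_, ?_⟩
  · rw [hft]; exact hjensen
  · rw [hft]
    have h1 : mm ^ t ≤ mp ^ t := pow_le_pow_left₀ hmm0.le hmm t
    have h2 : (1 - K) * mm ^ t ≤ (1 - K) * mp ^ t :=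
      mul_le_mul_of_nonneg_left h1 (by linarith)
    linarith
  · rw [hft]
    have h2 : 0 ≤ (1 - K) * mm ^ t :=
      mul_nonneg (by linarith) (pow_nonneg hmm0.le t)
    linarith
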